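/- Let A be a unital complex Banach algebra and a, b, c ∈ A satisfy aba = aca. Then for every λ ∈ ℂ, λ - ba has a generalized Drazin inverse if and only if λ - ac has a generalized Drazin inverse. -/

import Mathlib

def IsQuasinilpotent {A : Type*} [Ring A] (q : A) : Prop :=
  ∀ y : A, q * y = y * q → IsUnit (1 + q * y)

def IsGDrazinInverse {A : Type*} [Ring A] (a x : A) : Prop :=
  x = x * a * x ∧ a * x = x * a ∧ IsQuasinilpotent (a - a * a * x)

open Filter Topology ENNReal

section Analytic

variable {A : Type*} [NormedRing A] [NormedAlgebra ℂ A] [CompleteSpace A]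

/-- From radius zero, real-norm Gelfand sequence tends to zero. -/
lemma tendsto_rpow_of_radius_zero {q : A} (hq : spectralRadius ℂ q = 0) :
    Tendsto (fun n : ℕ => ‖q ^ n‖ ^ (1 / (n : ℝ))) atTop (𝓝 0) := by
  have h := spectrum.pow_norm_pow_one_div_tendsto_nhds_spectralRadius q
  rw [hq] at h
  have h2 : Tendsto (fun n : ℕ => (ENNReal.ofReal (‖q ^ n‖ ^ (1 / (n : ℝ)))).toReal)
      atTop (𝓝 ((0 : ℝ≥0∞).toReal)) :=
    (ENNReal.tendsto_toReal (by simp)).comp h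
  simpa [ENNReal.toReal_ofReal (Real.rpow_nonneg (norm_nonneg _) _)] using h2

lemma radius_zero_of_tendsto {w : A}
    (hw : Tendsto (fun n : ℕ => ‖w ^ n‖ ^ (1 / (n : ℝ))) atTop (𝓝 0)) :
    spectralRadius ℂ w = 0 := by
  have h := spectrum.pow_norm_pow_one_div_tendsto_nhds_spectralRadius w
  have h2 : Tendsto (fun n : ℕ => ENNReal.ofReal (‖w ^ n‖ ^ (1 / (n : ℝ)))) atTop (𝓝 0) := by
    simpa using ENNReal.tendsto_ofReal hw
  exact tendsto_nhds_unique h h2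

/-- eventually ‖q^n‖ ≤ ε^n -/
lemma my_eventually_norm_pow_le {q : A} (hq : spectralRadius ℂ q = 0) {ε : ℝ} (hε : 0 < ε) :
    ∀ᶠ n : ℕ in atTop, ‖q ^ n‖ ≤ ε ^ n := by
  have h := tendsto_rpow_of_radius_zero hq
  have h2 : ∀ᶠ n : ℕ in atTop, ‖q ^ n‖ ^ (1 / (n : ℝ)) < ε := h.eventually_lt_const hε
  filter_upwards [h2, eventually_ge_atTop 1] with n hn hn1
  have hnR : (0 : ℝ) < (n : ℝ) := by exact_mod_cast hn1
  have h3 := Real.rpow_le_rpow (Real.rpow_nonneg (norm_nonneg _) _) hn.le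
    (Nat.cast_nonneg n)
  rwa [← Real.rpow_mul (norm_nonneg _), one_div, inv_mul_cancel₀ hnR.ne', Real.rpow_one,
    Real.rpow_natCast] at h3

lemma norm_pow_tendsto_zero {q : A} (hq : spectralRadius ℂ q = 0) :
    Tendsto (fun n : ℕ => ‖q ^ n‖) atTop (𝓝 0) := by
  have hhalf := my_eventually_norm_pow_le hq (by norm_num : (0:ℝ) < 1/2)
  have hgeo : Tendsto (fun n : ℕ => ((1:ℝ)/2) ^ n) atTop (𝓝 0) := by
    apply _root_.tendsto_pow_atTop_nhds_zero_of_lt_one <;> norm_num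
  refine tendsto_of_tendsto_of_tendsto_of_le_of_le' tendsto_const_nhds hgeo ?_ ?_
  · exact Eventually.of_forall (fun n => norm_nonneg _)
  · exact hhalf

lemma eq_zero_of_norm_le_geom {z q : A} {C : ℝ}
    (hq : spectralRadius ℂ q = 0) (hz : ∀ n : ℕ, ‖z‖ ≤ C * ‖q ^ (n + 1)‖) : z = 0 := by
  have h := (norm_pow_tendsto_zero hq).comp (tendsto_add_atTop_nat 1)
  have h2 : Tendsto (fun n : ℕ => C * ‖q ^ (n + 1)‖) atTop (𝓝 (C * 0)) := h.const_mul C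
  rw [mul_zero] at h2
  have : ‖z‖ ≤ 0 := le_of_tendsto_of_tendsto' tendsto_const_nhds h2 hz
  simpa using norm_le_zero_iff.mp this

/-- Workhorse transfer lemma. -/
lemma radius_transfer {w q : A} (C D : ℝ) (hC : 1 ≤ C) (hD : 1 ≤ D)
    (hq : spectralRadius ℂ q = 0)
    (hb : ∀ n : ℕ, ‖w ^ (n + 2)‖ ≤ C * ‖q ^ n‖ * D ^ n) :
    spectralRadius ℂ w = 0 := by
  apply radius_zero_of_tendsto
  rw [Metric.tendsto_atTop]
  intro ε hε
  set δ : ℝ := min (ε / 2) (1 / 2) with hδdef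
  have hδ0 : 0 < δ := lt_min (by linarith) (by norm_num)
  have hδ1 : δ ≤ 1 / 2 := min_le_right _ _
  have hδε : δ < ε := lt_of_le_of_lt (min_le_left _ _) (by linarith)
  have hD0 : (0:ℝ) < D := lt_of_lt_of_le one_pos hD
  have hC0 : (0:ℝ) < C := lt_of_lt_of_le one_pos hC
  set η : ℝ := δ * δ / D with hηdef
  have hη0 : 0 < η := by positivity
  obtain ⟨N₁, hN₁⟩ := (my_eventually_norm_pow_le hq hη0).exists_forall_of_atTop
  have hgeo : Tendsto (fun n : ℕ => C * δ ^ n) atTop (𝓝 (C * 0)) :=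
    (_root_.tendsto_pow_atTop_nhds_zero_of_lt_one hδ0.le (by linarith)).const_mul C
  rw [mul_zero] at hgeo
  obtain ⟨N₂, hN₂⟩ := (hgeo.eventually (eventually_le_nhds one_pos)).exists_forall_of_atTop
  refine ⟨N₁ + N₂ + 4, fun m hm => ?_⟩
  obtain ⟨n, rfl⟩ : ∃ n, m = n + 4 := ⟨m - 4, by omega⟩
  have hn1 : N₁ ≤ n + 2 := by omega
  have hn2 : N₂ ≤ n := by omega
  have key : ‖w ^ (n + 4)‖ ≤ δ ^ (n + 4) := by
    have h1 : ‖w ^ (n + 2 + 2)‖ ≤ C * ‖q ^ (n+2)‖ * D ^ (n+2) := hb (n+2)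
    have h2 : ‖q ^ (n+2)‖ ≤ η ^ (n+2) := hN₁ (n+2) hn1
    have h3 : C * ‖q ^ (n+2)‖ * D ^ (n+2) ≤ C * η ^ (n+2) * D ^ (n+2) := by
      have := mul_le_mul_of_nonneg_right
        (mul_le_mul_of_nonneg_left h2 hC0.le) (by positivity : (0:ℝ) ≤ D ^ (n+2))
      linarith
    have h4 : C * η ^ (n+2) * D ^ (n+2) = C * (δ * δ) ^ (n+2) := by
      rw [hηdef, div_pow, mul_assoc, div_mul_cancel₀]
      positivity
    have h6 : C * δ ^ n ≤ 1 := by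
      calc C * δ ^ n ≤ C * δ ^ N₂ := by
            apply mul_le_mul_of_nonneg_left
              (pow_le_pow_of_le_one hδ0.le (by linarith) hn2) hC0.le
        _ ≤ 1 := hN₂ N₂ le_rfl
    have h5 : C * (δ * δ) ^ (n+2) ≤ δ ^ (n + 4) := by
      calc C * (δ * δ) ^ (n+2) = (C * δ ^ n) * δ ^ (n + 4) := by ring
        _ ≤ 1 * δ ^ (n + 4) := mul_le_mul_of_nonneg_right h6 (by positivity)
        _ = δ ^ (n + 4) := one_mul _
    have hfix : n + 2 + 2 = n + 4 := by omega
    rw [hfix] at h1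
    linarith
  have hw0 : (0:ℝ) ≤ ‖w ^ (n+4)‖ := norm_nonneg _
  have hle : ‖w ^ (n + 4)‖ ^ (1 / ((n+4 : ℕ) : ℝ)) ≤ δ := by
    have hexp : (0:ℝ) ≤ 1 / ((n+4:ℕ) : ℝ) := by positivity
    have h7 := Real.rpow_le_rpow hw0 key hexp
    calc ‖w ^ (n + 4)‖ ^ (1 / ((n+4 : ℕ) : ℝ)) ≤ (δ ^ (n+4)) ^ (1 / ((n+4 : ℕ) : ℝ)) := h7
      _ = δ := by
          rw [← Real.rpow_natCast δ (n+4), ← Real.rpow_mul hδ0.le,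
            mul_one_div, div_self (by positivity : ((n+4:ℕ):ℝ) ≠ 0), Real.rpow_one]
  rw [Real.dist_eq]
  have : |‖w ^ (n+4)‖ ^ (1 / ((n+4:ℕ) : ℝ)) - 0| = ‖w ^ (n+4)‖ ^ (1 / ((n+4:ℕ) : ℝ)) := by
    rw [sub_zero, abs_of_nonneg (Real.rpow_nonneg hw0 _)]
  push_cast at this hle ⊢
  rw [this]
  exact lt_of_le_of_lt hle hδε

end Analytic

section Bridge

variable {A : Type*} [NormedRing A] [NormedAlgebra ℂ A] [CompleteSpace A]

lemma spec_subset_of_radius_zero {q : A} (hq : spectralRadius ℂ q = 0) :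
    ∀ z ∈ spectrum ℂ q, z = 0 := by
  intro z hz
  have h1 : (‖z‖₊ : ℝ≥0∞) ≤ spectralRadius ℂ q :=
    le_iSup₂ (f := fun k (_ : k ∈ spectrum ℂ q) => (‖k‖₊ : ℝ≥0∞)) z hz
  rw [hq] at h1
  have h2 : ‖z‖₊ = 0 := by exact_mod_cast le_antisymm h1 zero_le
  simpa using h2

lemma radius_zero_of_qn {q : A} (hq : IsQuasinilpotent q) : spectralRadius ℂ q = 0 := by
  have hsub : ∀ z ∈ spectrum ℂ q, z = 0 := by
    intro z hz
    by_contra hz0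
    have hy := hq (algebraMap ℂ A (-z⁻¹)) (Algebra.commutes _ _).symm
    have hkey : z • (1 + q * algebraMap ℂ A (-z⁻¹)) = algebraMap ℂ A z - q := by
      rw [smul_add, Algebra.algebraMap_eq_smul_one, Algebra.algebraMap_eq_smul_one,
        mul_smul_comm, mul_one, smul_smul]
      rw [show z * -z⁻¹ = -1 by field_simp]
      simp [sub_eq_add_neg]
    have hunit : IsUnit (algebraMap ℂ A z - q) := by
      rw [← hkey, Algebra.smul_def]
      exact ((Ne.isUnit hz0).map (algebraMap ℂ A)).mul hy
    exact (spectrum.notMem_iff.mpr hunit) hz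
  rw [spectralRadius]
  refine le_antisymm (iSup₂_le fun k hk => ?_) zero_le
  simp [hsub k hk]

lemma qn_of_radius_zero {q : A} (hq : spectralRadius ℂ q = 0) : IsQuasinilpotent q := by
  intro y hy
  have hcomm : Commute q y := hy
  have hradius : spectralRadius ℂ (q * y) = 0 := by
    apply radius_transfer (‖q * q‖ * (‖y‖ * ‖y‖) + 1) (‖y‖ + 1)
      (le_add_of_nonneg_left (by positivity)) (le_add_of_nonneg_left (norm_nonneg _)) hq
    intro n
    have h1 : (q * y) ^ (n + 2) = q ^ (n + 2) * y ^ (n + 2) := hcomm.mul_pow _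
    have h2 : ‖q ^ (n+2)‖ ≤ ‖q ^ n‖ * ‖q * q‖ := by
      rw [pow_add, pow_two]; exact norm_mul_le _ _
    have h3 : ‖y ^ (n+2)‖ ≤ ‖y‖ ^ n * (‖y‖ * ‖y‖) := by
      calc ‖y ^ (n+2)‖ ≤ ‖y‖ ^ (n + 2) := norm_pow_le' _ (by omega)
        _ = ‖y‖ ^ n * (‖y‖ * ‖y‖) := by ring
    calc ‖(q * y) ^ (n + 2)‖ = ‖q ^ (n + 2) * y ^ (n + 2)‖ := by rw [h1]
      _ ≤ ‖q ^ (n+2)‖ * ‖y ^ (n+2)‖ := norm_mul_le _ _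
      _ ≤ (‖q ^ n‖ * ‖q * q‖) * (‖y‖ ^ n * (‖y‖ * ‖y‖)) := by
          apply mul_le_mul h2 h3 (norm_nonneg _) (by positivity)
      _ ≤ (‖q * q‖ * (‖y‖ * ‖y‖) + 1) * ‖q ^ n‖ * (‖y‖ + 1) ^ n := by
          have hyn : ‖y‖ ^ n ≤ (‖y‖ + 1) ^ n :=
            pow_le_pow_left₀ (norm_nonneg _) (by linarith) n
          have e1 : (‖q ^ n‖ * ‖q * q‖) * (‖y‖ ^ n * (‖y‖ * ‖y‖))
              = (‖q * q‖ * (‖y‖ * ‖y‖)) * ‖q ^ n‖ * ‖y‖ ^ n := by ring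
          rw [e1]
          have h4 : (‖q * q‖ * (‖y‖ * ‖y‖)) * ‖q ^ n‖ * ‖y‖ ^ n
              ≤ (‖q * q‖ * (‖y‖ * ‖y‖) + 1) * ‖q ^ n‖ * ‖y‖ ^ n := by
            apply mul_le_mul_of_nonneg_right ?_ (by positivity)
            apply mul_le_mul_of_nonneg_right (by linarith) (norm_nonneg _)
          have h5 : (‖q * q‖ * (‖y‖ * ‖y‖) + 1) * ‖q ^ n‖ * ‖y‖ ^ n
              ≤ (‖q * q‖ * (‖y‖ * ‖y‖) + 1) * ‖q ^ n‖ * (‖y‖ + 1) ^ n := by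
            apply mul_le_mul_of_nonneg_left hyn (by positivity)
          linarith
  have hsub := spec_subset_of_radius_zero hradius
  have hne : (-1 : ℂ) ∉ spectrum ℂ (q * y) := fun hmem => by simpa using hsub _ hmem
  have hunit := spectrum.notMem_iff.mp hne
  have heq : algebraMap ℂ A (-1) - q * y = -(1 + q * y) := by
    rw [map_neg, map_one]; abel
  rw [heq] at hunit
  simpa using hunit.neg

lemma qn_iff_radius_zero {q : A} : IsQuasinilpotent q ↔ spectralRadius ℂ q = 0 :=
  ⟨radius_zero_of_qn, qn_of_radius_zero⟩

end Bridge

section RingUtil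

variable {A : Type*} [Ring A]

/-- If z commutes with w and ρ is a two-sided inverse of w, then z commutes with ρ. -/
lemma comm_of_inv {w ρ z : A} (h1 : ρ * w = 1) (h2 : w * ρ = 1) (hz : z * w = w * z) :
    z * ρ = ρ * z := by
  calc z * ρ = ρ * w * (z * ρ) := by rw [h1, one_mul]
    _ = ρ * (w * z) * ρ := by noncomm_ring
    _ = ρ * (z * w) * ρ := by rw [← hz]
    _ = ρ * z * (w * ρ) := by noncomm_ring
    _ = ρ * z := by rw [h2, mul_one]

lemma qn_neg {q : A} (hq : IsQuasinilpotent q) : IsQuasinilpotent (-q) := by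
  intro y hy
  have hy' : q * (-y) = (-y) * q := by
    have := congrArg Neg.neg hy
    simpa [neg_mul, mul_neg] using this
  have := hq (-y) hy'
  simpa [mul_neg, neg_mul] using this

lemma gd_neg {u x : A} (h : IsGDrazinInverse u x) : IsGDrazinInverse (-u) (-x) := by
  obtain ⟨h1, h2, h3⟩ := h
  refine ⟨?_, ?_, ?_⟩
  · calc -x = -(x * u * x) := by rw [← h1]
      _ = -x * -u * -x := by noncomm_ring
  · calc -u * -x = u * x := by noncomm_ring
      _ = x * u := h2
      _ = -x * -u := by noncomm_ring
  · have : -u - -u * -u * -x = -(u - u * u * x) := by noncomm_ring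
    rw [this]
    exact qn_neg h3

end RingUtil

section SmulUtil

variable {A : Type*} [Ring A] [Algebra ℂ A]

lemma qn_smul (l : ℂ) {q : A} (hq : IsQuasinilpotent q) : IsQuasinilpotent (l • q) := by
  rcases eq_or_ne l 0 with rfl | hl
  · intro y hy; simpa using isUnit_one
  · intro y hy
    have hy' : q * y = y * q := by
      have h1 : l • (q * y) = l • (y * q) := by
        simpa [smul_mul_assoc, mul_smul_comm] using hy
      exact smul_right_injective A hl h1
    have := hq (l • y) (by rw [mul_smul_comm, smul_mul_assoc, hy'])
    simpa [mul_smul_comm, smul_smul] using this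

lemma gd_smul (l : ℂ) (hl : l ≠ 0) {u x : A} (h : IsGDrazinInverse u x) :
    IsGDrazinInverse (l • u) (l⁻¹ • x) := by
  obtain ⟨h1, h2, h3⟩ := h
  refine ⟨?_, ?_, ?_⟩
  · calc l⁻¹ • x = l⁻¹ • (x * u * x) := by rw [← h1]
      _ = l⁻¹ • x * (l • u) * (l⁻¹ • x) := by
          simp [smul_mul_assoc, mul_smul_comm, smul_smul, mul_inv_cancel₀ hl,
            inv_mul_cancel₀ hl, mul_assoc]
  · simp [smul_mul_assoc, mul_smul_comm, smul_smul, mul_inv_cancel₀ hl,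
      inv_mul_cancel₀ hl, h2]
  · have hscalar : l⁻¹ * (l * l) = l := by field_simp
    have e : l • u * (l • u) * (l⁻¹ • x) = l • (u * u * x) := by
      simp [smul_mul_assoc, mul_smul_comm, smul_smul, hscalar, mul_assoc]
    rw [e, ← smul_sub]
    exact qn_smul l h3

end SmulUtil

section Cline

variable {A : Type*} [NormedRing A] [NormedAlgebra ℂ A] [CompleteSpace A]

theorem gd_cline (a b c : A) (h : a * b * a = a * c * a)
    (hex : ∃ x, IsGDrazinInverse (a * c) x) : ∃ y, IsGDrazinInverse (b * a) y := by
  obtain ⟨x, hx1, hx2, hx3⟩ := hex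
  have hn : a * (b * a) = a * (c * a) := by simpa only [mul_assoc] using h
  have hx2n : a * (c * x) = x * (a * c) := by simpa only [mul_assoc] using hx2
  have N1 : ∀ z : A, a * (b * (a * z)) = a * (c * (a * z)) := fun z => by
    simpa only [mul_assoc] using congrArg (· * z) h
  have e1n : a * (c * (x * x)) = x := by
    have : a * c * (x * x) = x := by rw [← mul_assoc, hx2, ← hx1]
    simpa only [mul_assoc] using this
  have e2n : x * (x * (a * c)) = x := by
    have : x * x * (a * c) = x := by rw [mul_assoc, ← hx2, ← mul_assoc, ← hx1]
    simpa only [mul_assoc] using this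
  have N2 : ∀ z : A, a * (c * (x * z)) = x * (a * (c * z)) := fun z => by
    simpa only [mul_assoc] using congrArg (· * z) hx2
  have N3 : ∀ z : A, a * (c * (x * (x * z))) = x * z := fun z => by
    have h0 : a * c * (x * x) = x := by simpa only [mul_assoc] using e1n
    have : a * c * (x * x) * z = x * z := by rw [h0]
    simpa only [mul_assoc] using this
  have N4 : ∀ z : A, x * (x * (a * (c * z))) = x * z := fun z => by
    have h0 : x * x * (a * c) = x := by simpa only [mul_assoc] using e2n
    have : x * x * (a * c) * z = x * z := by rw [h0]
    simpa only [mul_assoc] using this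
  have Kn : a * (b * x) = a * (c * x) := by
    conv_lhs => rw [← e1n]
    rw [N1, e1n]
  have K : ∀ z : A, a * (b * (x * z)) = x * (a * (c * z)) := fun z => by
    have hb : a * b * x = a * c * x := by simpa only [mul_assoc] using Kn
    have h1 : a * (b * (x * z)) = a * (c * (x * z)) := by
      simpa only [mul_assoc] using congrArg (· * z) hb
    rw [h1, N2]
  have c1 : a * (b * (x * (x * a))) = x * a := by rw [K, N2, N4]
  refine ⟨b * (x * x) * a, ?_, ?_, ?_⟩
  · -- y = y * (b * a) * y
    show b * (x * x) * a = b * (x * x) * a * (b * a) * (b * (x * x) * a)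
    simp only [mul_assoc]
    rw [c1, K, N4]
  · -- (b * a) * y = y * (b * a)
    show b * a * (b * (x * x) * a) = b * (x * x) * a * (b * a)
    simp only [mul_assoc]
    rw [c1, hn, N4]
  · -- quasinilpotent part
    set q : A := a * c - a * c * (a * c) * x with hq
    have hq3 : IsQuasinilpotent q := hx3
    set w : A := b * a - b * a * (b * a) * (b * (x * x) * a) with hwdef
    have hcubic : b * a * (b * a) * (b * (x * x) * a) = b * (x * (a * (c * a))) := by
      simp only [mul_assoc]
      rw [c1, K]
    have hw : w = b * ((1 - x * (a * c)) * a) := by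
      rw [hwdef, hcubic]
      noncomm_ring
    -- G : a * (b * ((1 - x * (a*c)) * a)) = q * a
    have G : a * (b * ((1 - x * (a * c)) * a)) = q * a := by
      have hPa : (1 - x * (a * c)) * a = a - x * (a * (c * a)) := by noncomm_ring
      rw [hPa, mul_sub, mul_sub, hn, K]
      rw [hq, sub_mul]
      simp only [mul_assoc]
      rw [N2, N2]
    have sstep : ∀ z : A, b * (z * a) * w = b * (z * (q * a)) := fun z => by
      nth_rewrite 1 [hw]
      calc b * (z * a) * (b * ((1 - x * (a * c)) * a))
          = b * (z * (a * (b * ((1 - x * (a * c)) * a)))) := by noncomm_ring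
        _ = b * (z * (q * a)) := by rw [G]
    have xq0 : x * q = 0 := by
      have t : x * (a * (c * (a * (c * x)))) = x * (a * c) := by rw [hx2n, N2, N4]
      rw [hq, mul_sub]
      simp only [mul_assoc]
      rw [t, sub_self]
    have hcomm : a * c * q = q * (a * c) := by
      rw [hq]
      simp only [sub_mul, mul_sub, mul_assoc]
      rw [hx2n]
    have pqlem : (1 - x * (a * c)) * q = q := by
      rw [sub_mul, one_mul, mul_assoc x (a * c) q, hcomm, ← mul_assoc x q (a * c), xq0,
        zero_mul, sub_zero]
    have wpow : ∀ n : ℕ, w ^ (n + 2) = b * (q ^ (n + 1) * a) := by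
      intro n
      induction n with
      | zero =>
          rw [pow_two]
          nth_rewrite 1 [hw]
          rw [sstep, show (1 - x * (a * c)) * (q * a) = ((1 - x * (a * c)) * q) * a from
            (mul_assoc _ _ _).symm, pqlem, zero_add, pow_one]
      | succ m ih =>
          have h2 : w ^ (m + 1 + 2) = w ^ (m + 2) * w := by
            rw [show m + 1 + 2 = m + 2 + 1 from by omega, pow_succ]
          rw [h2, ih]
          calc b * (q ^ (m + 1) * a) * w = b * (q ^ (m + 1) * (q * a)) := sstep _
            _ = b * (q ^ (m + 1) * q * a) := by noncomm_ring
            _ = b * (q ^ (m + 1 + 1) * a) := by rw [← pow_succ]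
    have hrq : spectralRadius ℂ q = 0 := radius_zero_of_qn hq3
    have hrw : spectralRadius ℂ w = 0 := by
      apply radius_transfer (‖b‖ * ‖q‖ * ‖a‖ + 1) 1 (le_add_of_nonneg_left (by positivity))
        le_rfl hrq
      intro n
      rw [wpow n, one_pow, mul_one]
      calc ‖b * (q ^ (n + 1) * a)‖ ≤ ‖b‖ * ‖q ^ (n + 1) * a‖ := norm_mul_le _ _
        _ ≤ ‖b‖ * (‖q ^ (n + 1)‖ * ‖a‖) :=
            mul_le_mul_of_nonneg_left (norm_mul_le _ _) (norm_nonneg _)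
        _ ≤ ‖b‖ * ((‖q‖ * ‖q ^ n‖) * ‖a‖) := by
            have : ‖q ^ (n + 1)‖ ≤ ‖q‖ * ‖q ^ n‖ := by
              rw [pow_succ']
              exact norm_mul_le _ _
            apply mul_le_mul_of_nonneg_left
              (mul_le_mul_of_nonneg_right this (norm_nonneg _)) (norm_nonneg _)
        _ = (‖b‖ * ‖q‖ * ‖a‖) * ‖q ^ n‖ := by ring
        _ ≤ (‖b‖ * ‖q‖ * ‖a‖ + 1) * ‖q ^ n‖ := by
            apply mul_le_mul_of_nonneg_right (by linarith) (norm_nonneg _)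
    exact qn_of_radius_zero hrw

end Cline

section Jac

variable {A : Type*} [NormedRing A] [NormedAlgebra ℂ A] [CompleteSpace A]

theorem gd_jac (a b c : A) (h : a * b * a = a * c * a)
    (hex : ∃ x, IsGDrazinInverse (1 - a * c) x) :
    ∃ y, IsGDrazinInverse (1 - b * a) y := by
  obtain ⟨x, hx1, hx2, hx3⟩ := hex
  have hn : a * (b * a) = a * (c * a) := by simpa only [mul_assoc] using h
  obtain ⟨al, hal⟩ : ∃ t : A, t = 1 - a * c := ⟨_, rfl⟩
  rw [← hal] at hx1 hx2 hx3
  obtain ⟨q, hq⟩ : ∃ t : A, t = al - al * al * x := ⟨_, rfl⟩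
  rw [← hq] at hx3
  have hq3 : IsQuasinilpotent q := hx3
  obtain ⟨pi, hpi⟩ : ∃ t : A, t = 1 - al * x := ⟨_, rfl⟩
  -- basic facts
  have f1 : x * al * x = x := hx1.symm
  have c3 : x * pi = 0 := by
    rw [hpi, mul_sub, mul_one, ← mul_assoc, f1, sub_self]
  have c4 : pi * x = 0 := by
    rw [hpi, sub_mul, one_mul, hx2, f1, sub_self]
  have c5a : al * pi = q := by rw [hpi, hq]; noncomm_ring
  have c5b : pi * al = q := by
    have e : al * x * al = al * al * x := by rw [mul_assoc, ← hx2, ← mul_assoc]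
    rw [hpi, hq, sub_mul, one_mul, e]
  have c6 : pi * pi = pi := by
    have e : pi * pi = pi - al * (x * pi) := by rw [hpi]; noncomm_ring
    rw [e, c3, mul_zero, sub_zero]
  have c7a : q * pi = q := by rw [← c5a, mul_assoc, c6]
  have c7b : pi * q = q := by rw [← c5b, ← mul_assoc, c6]
  have c8a : q * x = 0 := by rw [← c5a, mul_assoc, c4, mul_zero]
  have c8b : x * q = 0 := by rw [← c5b, ← mul_assoc, c3, zero_mul]
  have qcomm_al : al * q = q * al := by
    rw [← c5a, mul_assoc al pi al, c5b, c5a]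
  -- the unit 1 - q and its inverse rho
  have hu : IsUnit (1 - q) := by
    have hcm : q * (-1 : A) = (-1 : A) * q := by rw [mul_neg_one, neg_one_mul]
    have := hq3 (-1) hcm
    simpa [mul_neg_one, sub_eq_add_neg] using this
  obtain ⟨rho, hrho1, hrho2⟩ : ∃ r : A, r * (1 - q) = 1 ∧ (1 - q) * r = 1 :=
    ⟨↑hu.unit⁻¹, hu.val_inv_mul, hu.mul_val_inv⟩
  have rpi : pi * rho = rho * pi := by
    apply comm_of_inv hrho1 hrho2
    rw [mul_sub, sub_mul, mul_one, one_mul, c7a, c7b]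
  have ral : al * rho = rho * al := by
    apply comm_of_inv hrho1 hrho2
    rw [mul_sub, sub_mul, mul_one, one_mul, qcomm_al]
  have rx : x * rho = rho * x := by
    apply comm_of_inv hrho1 hrho2
    rw [mul_sub, sub_mul, mul_one, one_mul, c8a, c8b]
  obtain ⟨s, hs⟩ : ∃ t : A, t = rho * pi := ⟨_, rfl⟩
  have s_pi : s * pi = s := by rw [hs, mul_assoc, c6]
  have pi_s : pi * s = s := by rw [hs, ← mul_assoc, rpi, mul_assoc, c6]
  have rho_eq : rho = 1 + rho * q := by
    have e : rho - rho * q = 1 := by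
      rw [mul_sub, mul_one] at hrho1; exact hrho1
    rw [← e]; noncomm_ring
  have s_q : s * q = rho * q := by rw [hs, mul_assoc, c7b]
  have s_al : s * al = rho * q := by rw [hs, mul_assoc, c5b]
  have al_s : al * s = rho * q := by rw [hs, ← mul_assoc, ral, mul_assoc, c5a]
  have s_eq : s = pi + rho * q := by
    rw [hs]
    nth_rewrite 1 [rho_eq]
    rw [add_mul, one_mul, mul_assoc, c7a]
  have s_x : s * x = 0 := by rw [hs, mul_assoc, c4, mul_zero]
  have x_s : x * s = 0 := by rw [hs, ← mul_assoc, rx, mul_assoc, c3, mul_zero]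
  have hu_eq : a * c = 1 - al := by rw [hal]; noncomm_ring
  -- Delta facts
  obtain ⟨D, hD⟩ : ∃ t : A, t = a * b - a * c := ⟨_, rfl⟩
  have hab : a * b = a * c + D := by rw [hD]; noncomm_ring
  have dA : D * a = 0 := by rw [hD, sub_mul, h, sub_self]
  have dU : D * (a * c) = 0 := by
    have h2 : a * b * (a * c) = a * c * (a * c) := by
      rw [← mul_assoc, h, mul_assoc]
    rw [hD, sub_mul, h2, sub_self]
  have dAl : D * al = D := by rw [hal, mul_sub, mul_one, dU, sub_zero]
  have dQ : D * q = D * pi := by rw [← c5a, ← mul_assoc, dAl]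
  have dQn : ∀ n : ℕ, D * q ^ (n + 1) = D * pi := by
    intro n
    induction n with
    | zero => rw [pow_one, dQ]
    | succ m ih =>
        calc D * q ^ (m + 1 + 1) = D * q ^ (m + 1) * q := by
              rw [pow_succ, mul_assoc]
          _ = D * pi * q := by rw [ih]
          _ = D * q := by rw [mul_assoc, c7b]
          _ = D * pi := dQ
  have hrq : spectralRadius ℂ q = 0 := radius_zero_of_qn hq3
  have dpi : D * pi = 0 := by
    apply eq_zero_of_norm_le_geom hrq (C := ‖D‖)
    intro n
    rw [← dQn n]
    exact norm_mul_le _ _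
  have drho : D * rho = D := by
    have d1 : D * (1 - q) = D := by rw [mul_sub, mul_one, dQ, dpi, sub_zero]
    calc D * rho = D * (1 - q) * rho := by rw [d1]
      _ = D * ((1 - q) * rho) := by rw [mul_assoc]
      _ = D := by rw [hrho2, mul_one]
  have dS : D * s = 0 := by rw [hs, ← mul_assoc, drho, dpi]
  have dX : D * x = D := by
    have h1 : D * (al * x) + D * pi = D := by
      rw [← mul_add, show al * x + pi = 1 from by rw [hpi]; noncomm_ring, mul_one]
    rw [← mul_assoc, dAl, dpi, add_zero] at h1
    exact h1
  -- key reductions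
  have xU : x * (a * c) = x - 1 + pi := by
    rw [hu_eq, mul_sub, mul_one, ← hx2, show al * x = 1 - pi from by rw [hpi]; noncomm_ring]
    noncomm_ring
  have sU : s * (a * c) = pi := by
    rw [hu_eq, mul_sub, mul_one, s_al, s_eq]
    noncomm_ring
  have uS : (a * c) * s = pi := by
    rw [hu_eq, sub_mul, one_mul, al_s, s_eq]
    noncomm_ring
  have XU : (x - s) * (a * c) = x - 1 := by
    rw [sub_mul, xU, sU]
    noncomm_ring
  have dXS : D * (x - s) = D := by rw [mul_sub, dX, dS, sub_zero]
  have E1 : a * b * ((x - s) * a) = (x - 1) * a := by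
    rw [hab, add_mul]
    have e1 : a * c * ((x - s) * a) = (x - 1) * a := by
      rw [← mul_assoc, ← XU]
      have alXS : al * (x - s) = (x - s) * al := by
        rw [mul_sub, sub_mul, hx2, al_s, s_al]
      have huc : a * c * (x - s) = (x - s) * (a * c) := by
        calc a * c * (x - s) = (x - s) - al * (x - s) := by rw [hu_eq]; noncomm_ring
          _ = (x - s) - (x - s) * al := by rw [alXS]
          _ = (x - s) * (a * c) := by rw [hu_eq]; noncomm_ring
      rw [huc, mul_assoc, ← mul_assoc]
    have e2 : D * ((x - s) * a) = 0 := by rw [← mul_assoc, dXS, dA]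
    rw [e1, e2, add_zero]
  have G : a * b * (s * a) = pi * a := by
    rw [hab, add_mul]
    have e1 : a * c * (s * a) = pi * a := by rw [← mul_assoc, uS]
    have e2 : D * (s * a) = 0 := by rw [← mul_assoc, dS, zero_mul]
    rw [e1, e2, add_zero]
  -- main reductions for the axioms
  have t1 : b * ((x - s) * a) * (b * a) = b * ((x - 1) * a) := by
    calc b * ((x - s) * a) * (b * a) = b * ((x - s) * (a * (b * a))) := by noncomm_ring
      _ = b * ((x - s) * (a * (c * a))) := by rw [hn]
      _ = b * (((x - s) * (a * c)) * a) := by noncomm_ring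
      _ = b * ((x - 1) * a) := by rw [XU]
  have t2 : b * a * (b * ((x - s) * a)) = b * ((x - 1) * a) := by
    calc b * a * (b * ((x - s) * a)) = b * (a * b * ((x - s) * a)) := by noncomm_ring
      _ = b * ((x - 1) * a) := by rw [E1]
  have hYbeta : (1 + b * ((x - s) * a)) * (1 - b * a) = 1 - b * (s * a) := by
    have expand : (1 + b * ((x - s) * a)) * (1 - b * a)
        = 1 - b * a + b * ((x - s) * a) - b * ((x - s) * a) * (b * a) := by noncomm_ring
    rw [expand, t1]
    noncomm_ring
  have hbetaY : (1 - b * a) * (1 + b * ((x - s) * a)) = 1 - b * (s * a) := by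
    have expand : (1 - b * a) * (1 + b * ((x - s) * a))
        = 1 - b * a + b * ((x - s) * a) - b * a * (b * ((x - s) * a)) := by noncomm_ring
    rw [expand, t2]
    noncomm_ring
  have t3 : b * (s * a) * (b * ((x - s) * a)) = -(b * (s * a)) := by
    calc b * (s * a) * (b * ((x - s) * a)) = b * (s * (a * b * ((x - s) * a))) := by noncomm_ring
      _ = b * (s * ((x - 1) * a)) := by rw [E1]
      _ = b * ((s * x) * a) - b * (s * a) := by noncomm_ring
      _ = -(b * (s * a)) := by rw [s_x, zero_mul, mul_zero, zero_sub]
  have t4 : b * a * (b * (s * a)) = b * (pi * a) := by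
    calc b * a * (b * (s * a)) = b * (a * b * (s * a)) := by noncomm_ring
      _ = b * (pi * a) := by rw [G]
  have Ginner : a * b * ((s * q) * a) = q * a := by
    rw [hab, add_mul]
    have e1 : a * c * ((s * q) * a) = q * a := by
      have e0 : a * c * (s * q) = q := by rw [← mul_assoc, uS, c7b]
      rw [← mul_assoc, e0]
    have e2 : D * ((s * q) * a) = 0 := by
      rw [← mul_assoc, ← mul_assoc, dS, zero_mul, zero_mul]
    rw [e1, e2, add_zero]
  -- the candidate
  refine ⟨1 + b * ((x - s) * a), ?_, ?_, ?_⟩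
  · -- Y = Y * beta * Y
    have e : (1 + b * ((x - s) * a)) * (1 - b * a) * (1 + b * ((x - s) * a))
        = 1 + b * ((x - s) * a) := by
      rw [hYbeta]
      have expand : (1 - b * (s * a)) * (1 + b * ((x - s) * a))
          = 1 + b * ((x - s) * a) - b * (s * a) - b * (s * a) * (b * ((x - s) * a)) := by
        noncomm_ring
      rw [expand, t3]
      noncomm_ring
    exact e.symm
  · exact hbetaY.trans hYbeta.symm
  · -- quasinilpotent part
    obtain ⟨w, hwdef⟩ : ∃ t : A, t = 1 - b * a -
        (1 - b * a) * (1 - b * a) * (1 + b * ((x - s) * a)) := ⟨_, rfl⟩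
    rw [← hwdef]
    have hw2 : w = b * ((s * q) * a) := by
      rw [hwdef]
      calc 1 - b * a - (1 - b * a) * (1 - b * a) * (1 + b * ((x - s) * a))
          = 1 - b * a - (1 - b * a) * ((1 - b * a) * (1 + b * ((x - s) * a))) := by noncomm_ring
        _ = 1 - b * a - (1 - b * a) * (1 - b * (s * a)) := by rw [hbetaY]
        _ = b * (s * a) - b * a * (b * (s * a)) := by noncomm_ring
        _ = b * (s * a) - b * (pi * a) := by rw [t4]
        _ = b * ((s - pi) * a) := by noncomm_ring
        _ = b * ((rho * q) * a) := by
            rw [show s - pi = rho * q from by rw [s_eq]; noncomm_ring]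
        _ = b * ((s * q) * a) := by rw [← s_q]
    have sstep : ∀ z : A, b * (z * a) * w = b * ((z * q) * a) := fun z => by
      rw [hw2]
      calc b * (z * a) * (b * ((s * q) * a)) = b * (z * (a * b * ((s * q) * a))) := by
            noncomm_ring
        _ = b * (z * (q * a)) := by rw [Ginner]
        _ = b * ((z * q) * a) := by noncomm_ring
    have wpow : ∀ n : ℕ, w ^ (n + 2) = b * ((s * q ^ (n + 2)) * a) := by
      intro n
      induction n with
      | zero =>
          rw [pow_two]
          nth_rewrite 1 [hw2]
          rw [sstep (s * q)]
          rw [show s * q * q = s * q ^ (0 + 2) from by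
            rw [show (0:ℕ) + 2 = 2 from rfl, pow_two, mul_assoc]]
      | succ m ih =>
          have h2 : w ^ (m + 1 + 2) = w ^ (m + 2) * w := by
            rw [show m + 1 + 2 = m + 2 + 1 from by omega, pow_succ]
          rw [h2, ih, sstep (s * q ^ (m + 2))]
          rw [show s * q ^ (m + 2) * q = s * q ^ (m + 1 + 2) from by
            rw [mul_assoc, ← pow_succ, show m + 2 + 1 = m + 1 + 2 from by omega]]
    have hrw : spectralRadius ℂ w = 0 := by
      apply radius_transfer (‖b‖ * ‖s * (q * q)‖ * ‖a‖ + 1) 1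
        (le_add_of_nonneg_left (by positivity)) le_rfl hrq
      intro n
      rw [one_pow, mul_one, wpow n]
      have hq2 : q ^ (n + 2) = q * q * q ^ n := by
        rw [show n + 2 = 2 + n from by omega, pow_add, pow_two]
      rw [hq2]
      calc ‖b * ((s * (q * q * q ^ n)) * a)‖ ≤ ‖b‖ * ‖(s * (q * q * q ^ n)) * a‖ :=
            norm_mul_le _ _
        _ ≤ ‖b‖ * (‖s * (q * q * q ^ n)‖ * ‖a‖) :=
            mul_le_mul_of_nonneg_left (norm_mul_le _ _) (norm_nonneg _)
        _ ≤ ‖b‖ * ((‖s * (q * q)‖ * ‖q ^ n‖) * ‖a‖) := by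
            have e3 : s * (q * q * q ^ n) = (s * (q * q)) * q ^ n := by
              noncomm_ring
            have : ‖s * (q * q * q ^ n)‖ ≤ ‖s * (q * q)‖ * ‖q ^ n‖ := by
              rw [e3]; exact norm_mul_le _ _
            apply mul_le_mul_of_nonneg_left
              (mul_le_mul_of_nonneg_right this (norm_nonneg _)) (norm_nonneg _)
        _ = (‖b‖ * ‖s * (q * q)‖ * ‖a‖) * ‖q ^ n‖ := by ring
        _ ≤ (‖b‖ * ‖s * (q * q)‖ * ‖a‖ + 1) * ‖q ^ n‖ := by
            apply mul_le_mul_of_nonneg_right (by linarith) (norm_nonneg _)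
    exact qn_of_radius_zero hrw

end Jac

theorem corach_jacobson_gDrazin {A : Type*} [NormedRing A] [NormedAlgebra ℂ A]
    [CompleteSpace A] (a b c : A) (h : a * b * a = a * c * a) (l : ℂ) :
    (∃ x : A, IsGDrazinInverse (l • (1 : A) - b * a) x) ↔
      (∃ x : A, IsGDrazinInverse (l • (1 : A) - a * c) x) := by
  by_cases hl : l = 0
  · subst hl
    simp only [zero_smul, zero_sub]
    have negiff : ∀ z : A, (∃ y, IsGDrazinInverse (-z) y) ↔ (∃ y, IsGDrazinInverse z y) := by
      intro z
      constructor
      · rintro ⟨y, hy⟩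
        exact ⟨-y, by simpa using gd_neg hy⟩
      · rintro ⟨y, hy⟩
        exact ⟨-y, gd_neg hy⟩
    rw [negiff, negiff]
    constructor
    · intro h1
      have h2 := gd_cline b a a rfl h1
      have h3 := gd_cline a c b h.symm h2
      exact gd_cline c a a rfl h3
    · exact gd_cline a b c h
  · have key : ∀ z : A, (∃ y, IsGDrazinInverse (l • z) y) ↔ (∃ y, IsGDrazinInverse z y) := by
      intro z
      constructor
      · rintro ⟨y, hy⟩
        refine ⟨l • y, ?_⟩
        have := gd_smul l⁻¹ (inv_ne_zero hl) hy
        simpa [smul_smul, inv_mul_cancel₀ hl, inv_inv] using this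
      · rintro ⟨y, hy⟩
        exact ⟨l⁻¹ • y, gd_smul l hl hy⟩
    have e1 : l • (1:A) - b * a = l • (1 - (l⁻¹ • b) * a) := by
      simp [smul_sub, smul_mul_assoc, smul_smul, mul_inv_cancel₀ hl]
    have e2 : l • (1:A) - a * c = l • (1 - a * (l⁻¹ • c)) := by
      simp [smul_sub, mul_smul_comm, smul_smul, mul_inv_cancel₀ hl]
    have h' : a * (l⁻¹ • b) * a = a * (l⁻¹ • c) * a := by
      simp only [mul_smul_comm, smul_mul_assoc]
      rw [h]
    rw [e1, e2, key, key]
    constructor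
    · intro h1
      have h2 := gd_jac (l⁻¹ • b) a a rfl h1
      have h3 := gd_jac a (l⁻¹ • c) (l⁻¹ • b) h'.symm h2
      exact gd_jac (l⁻¹ • c) a a rfl h3
    · exact gd_jac a (l⁻¹ • b) (l⁻¹ • c) h'
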